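/- Let K be a differential field of characteristic zero with field of constants C, and let M = K(u₁,…,uₙ) be a Picard–Vessiot extension of K with fundamental system of solutions (u₁,…,uₙ) of a linear homogeneous differential equation of order n over K. Every differential K-automorphism σ of M satisfies σ(u_i) = Σ_j c_{ij} u_j for a unique invertible matrix (c_{ij}) with entries in C, and the resulting injective group homomorphism from the differential Galois group G(M/K) into GL_n(C) identifies G(M/K) with an algebraic matrix group over C: there exists a set S of polynomials in n² variables with coefficients in C such that an invertible matrix (c_{ij}) ∈ GL_n(C) arises from a differential K-automorphism of M if and only if every polynomial in S vanishes at (c_{ij}). -/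

import Mathlib

set_option linter.unusedSectionVars false
set_option maxHeartbeats 1000000
set_option synthInstance.maxHeartbeats 1000000

namespace DGalAux

open MvPolynomial Finset

section Generic



variable {R : Type*} [CommRing R] (n : ℕ)

/-- Substitution `X (k,i) ↦ ∑ j, c i j • X (k,j)` (right translation by matrix `c`). -/
noncomputable def TT (c : Matrix (Fin n) (Fin n) R) :
    MvPolynomial (Fin n × Fin n) R →+* MvPolynomial (Fin n × Fin n) R :=
  eval₂Hom C fun q => ∑ j : Fin n, C (c q.2 j) * X (q.1, j)

/-- Substitution `X (i,j) ↦ ∑ l, c i l • X (l,j)` (left translation by matrix `c`). -/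
noncomputable def SL (c : Matrix (Fin n) (Fin n) R) :
    MvPolynomial (Fin n × Fin n) R →+* MvPolynomial (Fin n × Fin n) R :=
  eval₂Hom C fun q => ∑ l : Fin n, C (c q.1 l) * X (l, q.2)

@[simp] lemma TT_C (c : Matrix (Fin n) (Fin n) R) (r : R) : TT n c (C r) = C r := by
  simp [TT]

@[simp] lemma TT_X (c : Matrix (Fin n) (Fin n) R) (q : Fin n × Fin n) :
    TT n c (X q) = ∑ j : Fin n, C (c q.2 j) * X (q.1, j) := by
  simp [TT]

@[simp] lemma SL_C (c : Matrix (Fin n) (Fin n) R) (r : R) : SL n c (C r) = C r := by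
  simp [SL]

@[simp] lemma SL_X (c : Matrix (Fin n) (Fin n) R) (q : Fin n × Fin n) :
    SL n c (X q) = ∑ l : Fin n, C (c q.1 l) * X (l, q.2) := by
  simp [SL]

lemma TT_comp (c d : Matrix (Fin n) (Fin n) R) (p : MvPolynomial (Fin n × Fin n) R) :
    TT n c (TT n d p) = TT n (d * c) p := by
  have h : (TT n c).comp (TT n d) = TT n (d * c) := by
    apply MvPolynomial.ringHom_ext
    · intro r; simp
    · intro q
      simp only [RingHom.comp_apply, TT_X, map_sum, _root_.map_mul, TT_C]
      simp_rw [Finset.mul_sum]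
      rw [Finset.sum_comm]
      refine Finset.sum_congr rfl fun l _ => ?_
      rw [Matrix.mul_apply, map_sum, Finset.sum_mul]
      refine Finset.sum_congr rfl fun j _ => ?_
      rw [_root_.map_mul]; ring
  exact RingHom.congr_fun h p

lemma TT_one (p : MvPolynomial (Fin n × Fin n) R) : TT n (1 : Matrix (Fin n) (Fin n) R) p = p := by
  have h : TT n (1 : Matrix (Fin n) (Fin n) R) = RingHom.id _ := by
    apply MvPolynomial.ringHom_ext
    · intro r; simp
    · intro q
      simp [Matrix.one_apply, apply_ite C, ite_mul]
  rw [h]; rfl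

lemma eval_TT (x : (Fin n × Fin n) → R) (c : Matrix (Fin n) (Fin n) R)
    (p : MvPolynomial (Fin n × Fin n) R) :
    eval x (TT n c p) = eval (fun q => ∑ j : Fin n, c q.2 j * x (q.1, j)) p := by
  have h : (eval x).comp (TT n c) = eval (fun q => ∑ j : Fin n, c q.2 j * x (q.1, j)) := by
    apply MvPolynomial.ringHom_ext
    · intro r; simp
    · intro q; simp
  exact RingHom.congr_fun h p

lemma eval_SL (x : (Fin n × Fin n) → R) (c : Matrix (Fin n) (Fin n) R)
    (p : MvPolynomial (Fin n × Fin n) R) :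
    eval x (SL n c p) = eval (fun q => ∑ l : Fin n, c q.1 l * x (l, q.2)) p := by
  have h : (eval x).comp (SL n c) = eval (fun q => ∑ l : Fin n, c q.1 l * x (l, q.2)) := by
    apply MvPolynomial.ringHom_ext
    · intro r; simp
    · intro q; simp
  exact RingHom.congr_fun h p


lemma sum_swap_neg {S : Type*} [CommRing S] {n₁ n₂ : ℕ}
    (A : Fin n₁ → S) (B : Fin n₂ → S) (X : Fin n₁ → Fin n₂ → S) :
    -∑ m : Fin n₁, A m * ∑ j : Fin n₂, B j * X m j
      = ∑ j : Fin n₂, B j * -∑ m : Fin n₁, A m * X m j := by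
  have S1 : ∑ m : Fin n₁, A m * ∑ j : Fin n₂, B j * X m j
      = ∑ j : Fin n₂, B j * ∑ m : Fin n₁, A m * X m j := by
    simp_rw [Finset.mul_sum]
    rw [Finset.sum_comm]
    exact Finset.sum_congr rfl fun j _ => Finset.sum_congr rfl fun m _ => by ring
  simp only [mul_neg, Finset.sum_neg_distrib]
  rw [S1]

end Generic

variable {K M : Type*} [Field K] [CharZero K] [Field M]
    (δK : K → K)
    (hKadd : ∀ x y, δK (x + y) = δK x + δK y)
    (hKmul : ∀ x y, δK (x * y) = x * δK y + y * δK x)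
    (ι : K →+* M) (δM : M → M)
    (hMadd : ∀ x y, δM (x + y) = δM x + δM y)
    (hMmul : ∀ x y, δM (x * y) = x * δM y + y * δM x)
    (hcompat : ∀ c : K, δM (ι c) = ι (δK c))
    (n : ℕ) (a : Fin n → K) (u : Fin n → M)
    (hsol : ∀ i, δM^[n] (u i) + ∑ j : Fin n, ι (a j) * δM^[n - 1 - (j : ℕ)] (u i) = 0)
    (hwronskian : Matrix.det (Matrix.of fun i j : Fin n => δM^[(i : ℕ)] (u j)) ≠ 0)
    (hgen : Subfield.closure (Set.range ι ∪ Set.range u) = ⊤)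
    (hconst : ∀ z : M, δM z = 0 → ∃ c : K, δK c = 0 ∧ ι c = z)

section Basic

include hMadd

lemma dM0 : δM 0 = 0 := by have := hMadd 0 0; simpa using this

lemma dM_neg (x : M) : δM (-x) = -δM x := by
  have h := hMadd x (-x); rw [add_neg_cancel, dM0 δM hMadd] at h; linear_combination -h

lemma dM_sum {α : Type*} (s : Finset α) (f : α → M) :
    δM (∑ i ∈ s, f i) = ∑ i ∈ s, δM (f i) :=
  map_sum (AddMonoidHom.mk' δM hMadd) f s

include hMmul

lemma dM1 : δM 1 = 0 := by have := hMmul 1 1; simp at this; exact this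

lemma dM_const_mul {x : M} (hx : δM x = 0) (y : M) : δM (x * y) = x * δM y := by
  rw [hMmul, hx]; ring

lemma dM_inv (x : M) (hx : δM x = 0) : δM x⁻¹ = 0 := by
  rcases eq_or_ne x 0 with h | h
  · simp [h, dM0 δM hMadd]
  · have h1 : δM (x * x⁻¹) = 0 := by rw [mul_inv_cancel₀ h, dM1 δM hMadd hMmul]
    rw [hMmul, hx] at h1
    have h2 : x * δM x⁻¹ = 0 := by linear_combination h1
    rcases mul_eq_zero.mp h2 with h' | h'
    · exact absurd h' h
    · exact h'


lemma dM_inv_formula (x : M) (hx : x ≠ 0) : δM x⁻¹ = -(x⁻¹ * x⁻¹ * δM x) := by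
  have hy : x * x⁻¹ = 1 := mul_inv_cancel₀ hx
  have h1 : δM (x * x⁻¹) = 0 := by rw [hy, dM1 δM hMadd hMmul]
  rw [hMmul] at h1
  linear_combination x⁻¹ * h1 - (δM x⁻¹) * hy

/-- The subfield of constants of `M`. -/
def CM : Subfield M where
  carrier := {z | δM z = 0}
  one_mem' := dM1 δM hMadd hMmul
  zero_mem' := dM0 δM hMadd
  add_mem' := by intro x y hx hy; simp only [Set.mem_setOf_eq] at *; rw [hMadd, hx, hy, add_zero]
  neg_mem' := by intro x hx; simp only [Set.mem_setOf_eq] at *; rw [dM_neg δM hMadd, hx, neg_zero]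
  mul_mem' := by
    intro x y hx hy; simp only [Set.mem_setOf_eq] at *; rw [hMmul, hx, hy]; ring
  inv_mem' := by intro x hx; simp only [Set.mem_setOf_eq] at *; exact dM_inv δM hMadd hMmul x hx

lemma mem_CM {z : M} : z ∈ CM δM hMadd hMmul ↔ δM z = 0 := Iff.rfl

end Basic

section BasicK

include hKadd

lemma dK0 : δK 0 = 0 := dM0 δK hKadd
lemma dK_neg (x : K) : δK (-x) = -δK x := dM_neg δK hKadd x
lemma dK_sub (x y : K) : δK (x - y) = δK x - δK y := by
  rw [sub_eq_add_neg, hKadd, dK_neg δK hKadd, sub_eq_add_neg]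

include hKmul
/-- The subfield of constants of `K`. -/
def CK : Subfield K := CM δK hKadd hKmul

lemma mem_CK {z : K} : z ∈ CK δK hKadd hKmul ↔ δK z = 0 := Iff.rfl

end BasicK

section Deriv

lemma iter_succ (x : M) (k : ℕ) : δM^[k + 1] x = δM (δM^[k] x) :=
  Function.iterate_succ_apply' δM k x

include hMadd hMmul hcompat in
lemma dM_iter_const_mul {c : K} (hc : δK c = 0) (y : M) (k : ℕ) :
    δM^[k] (ι c * y) = ι c * δM^[k] y := by
  induction k with
  | zero => rfl
  | succ m ih =>
      rw [iter_succ, iter_succ, ih,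
        dM_const_mul δM hMadd hMmul (show δM (ι c) = 0 by rw [hcompat, hc, map_zero]) _]

end Deriv

/-- The Wronskian matrix. -/
def Wmat : Matrix (Fin n) (Fin n) M := Matrix.of fun k j : Fin n => δM^[(k : ℕ)] (u j)

section Solution

include hMadd hMmul hwronskian in
/-- Every solution of the ODE is a constant-linear combination of the `u j`,
along with all its derivatives. -/
lemma solution_expand (y : M)
    (hy : δM^[n] y + ∑ j : Fin n, ι (a j) * δM^[n - 1 - (j : ℕ)] y = 0)
    (hsol' : ∀ i, δM^[n] (u i) + ∑ j : Fin n, ι (a j) * δM^[n - 1 - (j : ℕ)] (u i) = 0) :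
    ∃ d : Fin n → M, (∀ j, δM (d j) = 0) ∧
      ∀ k : ℕ, k < n → δM^[k] y = ∑ j : Fin n, d j * δM^[k] (u j) := by
  classical
  set W : Matrix (Fin n) (Fin n) M := Wmat δM n u with hWdef
  have hW : IsUnit W.det := Ne.isUnit hwronskian
  set d : Fin n → M := W⁻¹.mulVec (fun k => δM^[(k : ℕ)] y) with hddef
  have hWd : W.mulVec d = (fun k : Fin n => δM^[(k : ℕ)] y) := by
    rw [hddef, Matrix.mulVec_mulVec, Matrix.mul_nonsing_inv _ hW, Matrix.one_mulVec]
  have hWdk : ∀ (m : ℕ) (hm : m < n), ∑ j : Fin n, δM^[m] (u j) * d j = δM^[m] y :=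
    fun m hm => congrFun hWd ⟨m, hm⟩
  have hrow : ∀ k : Fin n, ∑ j : Fin n, δM^[(k : ℕ)] (u j) * δM (d j) = 0 := by
    intro k
    have h1 : δM (∑ j : Fin n, δM^[(k : ℕ)] (u j) * d j) = δM (δM^[(k : ℕ)] y) := by
      rw [hWdk (k : ℕ) k.isLt]
    rw [dM_sum δM hMadd] at h1
    have h2 : ∀ j : Fin n, δM (δM^[(k : ℕ)] (u j) * d j)
        = δM^[(k : ℕ)] (u j) * δM (d j) + d j * δM^[(k : ℕ) + 1] (u j) := fun j => by
      rw [hMmul, iter_succ]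
    rw [Finset.sum_congr rfl fun j _ => h2 j, Finset.sum_add_distrib] at h1
    have hky : δM (δM^[(k : ℕ)] y) = δM^[(k : ℕ) + 1] y := (iter_succ δM y _).symm
    rcases (show (k : ℕ) + 1 < n ∨ (k : ℕ) + 1 = n by have := k.isLt; omega) with hlt | heq
    · have comm : ∑ j : Fin n, d j * δM^[(k : ℕ) + 1] (u j)
          = ∑ j : Fin n, δM^[(k : ℕ) + 1] (u j) * d j :=
        Finset.sum_congr rfl fun j _ => mul_comm _ _
      have hW1 := hWdk ((k : ℕ) + 1) hlt
      linear_combination h1 + hky - comm - hW1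
    · have hyn : δM^[n] y = -∑ m : Fin n, ι (a m) * δM^[n - 1 - (m : ℕ)] y := by
        linear_combination hy
      have hkn : δM^[(k : ℕ) + 1] y = δM^[n] y := by rw [heq]
      have huu : ∀ i : Fin n, δM^[(k : ℕ) + 1] (u i)
          = -∑ m : Fin n, ι (a m) * δM^[n - 1 - (m : ℕ)] (u i) := fun i => by
        rw [heq]; linear_combination hsol' i
      have hB : ∑ j : Fin n, d j * δM^[(k : ℕ) + 1] (u j)
          = -∑ m : Fin n, ι (a m) * δM^[n - 1 - (m : ℕ)] y := by
        have e1 : ∀ j : Fin n, d j * δM^[(k : ℕ) + 1] (u j)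
            = ∑ m : Fin n, -(ι (a m) * (δM^[n - 1 - (m : ℕ)] (u j) * d j)) := by
          intro j
          rw [huu j, mul_neg, Finset.mul_sum, ← Finset.sum_neg_distrib]
          exact Finset.sum_congr rfl fun m _ => by ring
        have e2 : ∀ m : Fin n, ι (a m) * δM^[n - 1 - (m : ℕ)] y
            = ∑ j : Fin n, ι (a m) * (δM^[n - 1 - (m : ℕ)] (u j) * d j) := by
          intro m
          rw [← hWdk (n - 1 - (m : ℕ)) (by have := m.isLt; omega), Finset.mul_sum]
        rw [Finset.sum_congr rfl fun j _ => e1 j, Finset.sum_comm,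
          Finset.sum_congr rfl fun m _ => e2 m, ← Finset.sum_neg_distrib]
        exact Finset.sum_congr rfl fun m _ => Finset.sum_neg_distrib _
      linear_combination h1 + hky + hkn + hyn - hB
  have hmv : W.mulVec (fun j => δM (d j)) = 0 := by
    funext k
    show ∑ j : Fin n, δM^[(k : ℕ)] (u j) * δM (d j) = 0
    exact hrow k
  have hzero : (fun j => δM (d j)) = fun _ : Fin n => (0 : M) := by
    have h1 : W⁻¹.mulVec (W.mulVec fun j => δM (d j)) = W⁻¹.mulVec 0 := by rw [hmv]
    rwa [Matrix.mulVec_mulVec, Matrix.nonsing_inv_mul _ hW, Matrix.one_mulVec,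
      Matrix.mulVec_zero] at h1
  refine ⟨d, fun j => congrFun hzero j, fun k hk => ?_⟩
  calc δM^[k] y = ∑ j : Fin n, δM^[k] (u j) * d j := (hWdk k hk).symm
    _ = ∑ j : Fin n, d j * δM^[k] (u j) := Finset.sum_congr rfl fun j _ => mul_comm _ _

end Solution


section Part1

lemma sigma_iter (σ : M ≃+* M) (hσδ : ∀ x : M, σ (δM x) = δM (σ x)) (x : M) (m : ℕ) :
    σ (δM^[m] x) = δM^[m] (σ x) := by
  induction m with
  | zero => rfl
  | succ k ih => rw [iter_succ, iter_succ, hσδ, ih]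

include hMadd hMmul hcompat hsol hwronskian hconst in
lemma exists_matrix (σ : M ≃+* M) (hσι : ∀ c : K, σ (ι c) = ι c)
    (hσδ : ∀ x : M, σ (δM x) = δM (σ x)) :
    ∃ c : Matrix (Fin n) (Fin n) K, (∀ i j, δK (c i j) = 0) ∧ c.det ≠ 0 ∧
      ∀ (i : Fin n) (k : ℕ), k < n →
        δM^[k] (σ (u i)) = ∑ j : Fin n, ι (c i j) * δM^[k] (u j) := by
  classical
  have hy : ∀ i : Fin n,
      δM^[n] (σ (u i)) + ∑ j : Fin n, ι (a j) * δM^[n - 1 - (j : ℕ)] (σ (u i)) = 0 := by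
    intro i
    have h := congrArg σ (hsol i)
    rw [map_add, map_sum, map_zero] at h
    rw [sigma_iter δM σ hσδ] at h
    have h2 : ∀ j : Fin n, σ (ι (a j) * δM^[n - 1 - (j : ℕ)] (u i))
        = ι (a j) * δM^[n - 1 - (j : ℕ)] (σ (u i)) := fun j => by
      rw [_root_.map_mul, hσι, sigma_iter δM σ hσδ]
    rwa [Finset.sum_congr rfl fun j _ => h2 j] at h
  have H : ∀ i : Fin n, ∃ d : Fin n → M, (∀ j, δM (d j) = 0) ∧
      ∀ k : ℕ, k < n → δM^[k] (σ (u i)) = ∑ j : Fin n, d j * δM^[k] (u j) :=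
    fun i => solution_expand ι δM hMadd hMmul n a u hwronskian _ (hy i) hsol
  choose d hd1 hd2 using H
  choose c hc1 hc2 using fun i j => hconst (d i j) (hd1 i j)
  have hexp : ∀ (i : Fin n) (k : ℕ), k < n →
      δM^[k] (σ (u i)) = ∑ j : Fin n, ι (c i j) * δM^[k] (u j) := by
    intro i k hk
    rw [hd2 i k hk]
    exact Finset.sum_congr rfl fun j _ => by rw [hc2 i j]
  refine ⟨Matrix.of c, fun i j => hc1 i j, ?_, hexp⟩
  intro hdet0
  set W : Matrix (Fin n) (Fin n) M := Matrix.of fun k j : Fin n => δM^[(k : ℕ)] (u j) with hW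
  have hmap : W.map σ = W * Matrix.transpose ((Matrix.of c).map ι) := by
    ext k i
    show σ (δM^[(k : ℕ)] (u i)) = ∑ j : Fin n, δM^[(k : ℕ)] (u j) * ι (c i j)
    rw [sigma_iter δM σ hσδ, hexp i (k : ℕ) k.isLt]
    exact Finset.sum_congr rfl fun j _ => mul_comm _ _
  have hdet : σ W.det = W.det * ι (Matrix.of c).det := by
    have h1 : (σ : M →+* M) W.det = (W.map (σ : M →+* M)).det := RingHom.map_det _ W
    have h2 : (ι : K →+* M) (Matrix.of c).det = ((Matrix.of c).map ι).det := RingHom.map_det ι _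
    calc σ W.det = (W.map ⇑σ).det := h1
      _ = (W * Matrix.transpose ((Matrix.of c).map ⇑ι)).det := by rw [hmap]
      _ = W.det * (Matrix.transpose ((Matrix.of c).map ⇑ι)).det := Matrix.det_mul _ _
      _ = W.det * ι (Matrix.of c).det := by rw [Matrix.det_transpose, ← h2]
  rw [hdet0, map_zero, mul_zero] at hdet
  have hz : W.det = 0 := by
    have h3 := congrArg σ.symm hdet
    rwa [RingEquiv.symm_apply_apply, map_zero] at h3
  exact hwronskian hz

include hMadd hMmul hcompat hwronskian in
lemma const_combo_unique (e : Fin n → K) (he : ∀ j, δK (e j) = 0)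
    (h0 : ∑ j : Fin n, ι (e j) * u j = 0) : ∀ j, e j = 0 := by
  classical
  have hk : ∀ k : ℕ, ∑ j : Fin n, ι (e j) * δM^[k] (u j) = 0 := by
    intro k
    induction k with
    | zero => simpa using h0
    | succ m ih =>
        have h := congrArg δM ih
        rw [dM_sum δM hMadd, dM0 δM hMadd] at h
        calc ∑ j : Fin n, ι (e j) * δM^[m + 1] (u j)
            = ∑ j : Fin n, δM (ι (e j) * δM^[m] (u j)) := by
              refine Finset.sum_congr rfl fun j _ => ?_
              rw [dM_const_mul δM hMadd hMmul
                (show δM (ι (e j)) = 0 by rw [hcompat, he j, map_zero]), iter_succ]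
          _ = 0 := h
  have hWe : (Matrix.of fun k j : Fin n => δM^[(k : ℕ)] (u j)).mulVec (fun j => ι (e j)) = 0 := by
    funext k
    show ∑ j : Fin n, δM^[(k : ℕ)] (u j) * ι (e j) = 0
    calc ∑ j : Fin n, δM^[(k : ℕ)] (u j) * ι (e j)
        = ∑ j : Fin n, ι (e j) * δM^[(k : ℕ)] (u j) := Finset.sum_congr rfl fun j _ => mul_comm _ _
      _ = 0 := hk (k : ℕ)
  have hvec : (fun j => ι (e j)) = fun _ : Fin n => (0 : M) := by
    have hWu : IsUnit (Matrix.of fun k j : Fin n => δM^[(k : ℕ)] (u j)).det := Ne.isUnit hwronskian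
    have h1 := congrArg (Matrix.mulVec (Matrix.of fun k j : Fin n => δM^[(k : ℕ)] (u j))⁻¹) hWe
    rwa [Matrix.mulVec_mulVec, Matrix.nonsing_inv_mul _ hWu, Matrix.one_mulVec,
      Matrix.mulVec_zero] at h1
  intro j
  have h2 : ι (e j) = 0 := congrFun hvec j
  exact ι.injective (h2.trans (map_zero ι).symm)

include hgen in
lemma aut_ext (σ τ : M ≃+* M) (hι : ∀ c : K, σ (ι c) = τ (ι c))
    (hu : ∀ i, σ (u i) = τ (u i)) : σ = τ := by
  have hE : ∀ x : M, σ x = τ x := by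
    have hle : Subfield.closure (Set.range ι ∪ Set.range u) ≤
        { carrier := {x : M | σ x = τ x}
          one_mem' := by simp
          zero_mem' := by simp
          add_mem' := by intro x y hx hy; simp only [Set.mem_setOf_eq] at *; rw [map_add, map_add, hx, hy]
          neg_mem' := by intro x hx; simp only [Set.mem_setOf_eq] at *; rw [map_neg, map_neg, hx]
          mul_mem' := by intro x y hx hy; simp only [Set.mem_setOf_eq] at *; rw [_root_.map_mul, _root_.map_mul, hx, hy]
          inv_mem' := by intro x hx; simp only [Set.mem_setOf_eq] at *; rw [map_inv₀, map_inv₀, hx] } := by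
      rw [Subfield.closure_le]
      rintro x (⟨k, rfl⟩ | ⟨i, rfl⟩)
      · exact hι k
      · exact hu i
    intro x
    have : x ∈ Subfield.closure (Set.range ι ∪ Set.range u) := by rw [hgen]; trivial
    exact hle this
  exact RingEquiv.ext hE

end Part1


section EvW

/-- Evaluation of polynomials at the Wronskian entries. -/
noncomputable def evW : MvPolynomial (Fin n × Fin n) K →+* M :=
  eval₂Hom ι fun q : Fin n × Fin n => δM^[(q.1 : ℕ)] (u q.2)

@[simp] lemma evW_C (r : K) : evW ι δM n u (C r) = ι r := by simp [evW]

@[simp] lemma evW_X (q : Fin n × Fin n) :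
    evW ι δM n u (X q) = δM^[(q.1 : ℕ)] (u q.2) := by simp [evW]

include hMadd in
lemma dM_iter_sum {α : Type*} (s : Finset α) (f : α → M) (k : ℕ) :
    δM^[k] (∑ i ∈ s, f i) = ∑ i ∈ s, δM^[k] (f i) := by
  induction k with
  | zero => rfl
  | succ m ih =>
      rw [iter_succ, ih, dM_sum δM hMadd]
      exact Finset.sum_congr rfl fun i _ => (iter_succ δM (f i) m).symm

include hMadd hMmul hcompat in
lemma Hc_of_auto (σ : M ≃+* M) (hσι : ∀ z : K, σ (ι z) = ι z)
    (hσδ : ∀ x : M, σ (δM x) = δM (σ x))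
    (c : Matrix (Fin n) (Fin n) K) (hc : ∀ i j, δK (c i j) = 0)
    (hu : ∀ i, σ (u i) = ∑ j : Fin n, ι (c i j) * u j)
    (p : MvPolynomial (Fin n × Fin n) K) (hp : evW ι δM n u p = 0) :
    evW ι δM n u (TT n c p) = 0 := by
  have hcomm : (σ : M →+* M).comp (evW ι δM n u) = (evW ι δM n u).comp (TT n c) := by
    apply MvPolynomial.ringHom_ext
    · intro r
      simp only [RingHom.comp_apply, evW_C, TT_C]
      exact hσι r
    · intro q
      simp only [RingHom.comp_apply, evW_X, TT_X, map_sum, _root_.map_mul, evW_C]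
      calc σ (δM^[(q.1 : ℕ)] (u q.2))
          = δM^[(q.1 : ℕ)] (σ (u q.2)) := sigma_iter δM σ hσδ _ _
        _ = δM^[(q.1 : ℕ)] (∑ j : Fin n, ι (c q.2 j) * u j) := by rw [hu q.2]
        _ = ∑ j : Fin n, δM^[(q.1 : ℕ)] (ι (c q.2 j) * u j) := dM_iter_sum δM hMadd _ _ _
        _ = ∑ j : Fin n, ι (c q.2 j) * δM^[(q.1 : ℕ)] (u j) :=
            Finset.sum_congr rfl fun j _ =>
              dM_iter_const_mul δK ι δM hMadd hMmul hcompat (hc q.2 j) (u j) _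
  have h := RingHom.congr_fun hcomm p
  simp only [RingHom.comp_apply] at h
  rw [← h, hp, map_zero]

/-- The generic twist of a polynomial: `X (k,i) ↦ ∑ j, w k j • Y (i,j)`. -/
noncomputable def PhiW : MvPolynomial (Fin n × Fin n) K →+* MvPolynomial (Fin n × Fin n) M :=
  eval₂Hom ((C : M →+* MvPolynomial (Fin n × Fin n) M).comp ι)
    fun q : Fin n × Fin n => ∑ j : Fin n, C (δM^[(q.1 : ℕ)] (u j)) * X (q.2, j)

lemma eval_PhiW (c : Matrix (Fin n) (Fin n) K) (p : MvPolynomial (Fin n × Fin n) K) :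
    eval (fun q0 : Fin n × Fin n => ι (c q0.1 q0.2)) (PhiW ι δM n u p)
      = evW ι δM n u (TT n c p) := by
  have h : (eval (fun q0 : Fin n × Fin n => ι (c q0.1 q0.2))).comp (PhiW ι δM n u)
      = (evW ι δM n u).comp (TT n c) := by
    apply MvPolynomial.ringHom_ext
    · intro r
      simp [PhiW]
    · intro q
      simp only [RingHom.comp_apply, TT_X, map_sum, _root_.map_mul, evW_C, evW_X, PhiW,
        eval₂Hom_X', eval_sum, eval_mul, eval_C, eval_X]
      exact Finset.sum_congr rfl fun j _ => mul_comm _ _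
  exact RingHom.congr_fun h p

end EvW

section BasisDecomp

include hKadd hKmul hMadd hMmul hcompat hconst in
lemma basis_decomp (F : MvPolynomial (Fin n × Fin n) M) :
    ∃ Q : Set (MvPolynomial (Fin n × Fin n) ↥(CK δK hKadd hKmul)),
      ∀ c' : Matrix (Fin n) (Fin n) ↥(CK δK hKadd hKmul),
        (eval (fun q0 : Fin n × Fin n => ι ((c' q0.1 q0.2 : K))) F = 0 ↔
          ∀ q ∈ Q, eval (fun q0 : Fin n × Fin n => c' q0.1 q0.2) q = 0) := by
  classical
  letI : Algebra ↥(CM δM hMadd hMmul) M := (CM δM hMadd hMmul).subtype.toAlgebra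
  set b := Module.Basis.ofVectorSpace ↥(CM δM hMadd hMmul) M with hb
  have hpull : ∀ z : ↥(CM δM hMadd hMmul), ∃ y : ↥(CK δK hKadd hKmul), ι (y : K) = (z : M) := by
    intro z
    obtain ⟨y, hy1, hy2⟩ := hconst (z : M) z.2
    exact ⟨⟨y, hy1⟩, hy2⟩
  choose pull hpull2 using hpull
  set qb : Module.Basis.ofVectorSpaceIndex ↥(CM δM hMadd hMmul) M →
      MvPolynomial (Fin n × Fin n) ↥(CK δK hKadd hKmul) :=
    fun bb => ∑ m ∈ F.support, monomial m (pull (b.repr (coeff m F) bb)) with hqb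
  refine ⟨Set.range qb, ?_⟩
  intro c'
  have hent : ∀ q0 : Fin n × Fin n, ι ((c' q0.1 q0.2 : K)) ∈ CM δM hMadd hMmul := by
    intro q0
    have h1 : δK ((c' q0.1 q0.2 : K)) = 0 := (c' q0.1 q0.2).2
    show δM (ι _) = 0
    rw [hcompat, h1, map_zero]
  have htm : ∀ m : (Fin n × Fin n) →₀ ℕ,
      (∏ q0 ∈ m.support, ι ((c' q0.1 q0.2 : K)) ^ m q0) ∈ CM δM hMadd hMmul := fun m =>
    Subfield.prod_mem _ fun q0 _ => Subfield.pow_mem _ (hent q0) _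
  set t : ((Fin n × Fin n) →₀ ℕ) → ↥(CM δM hMadd hMmul) :=
    fun m => ⟨∏ q0 ∈ m.support, ι ((c' q0.1 q0.2 : K)) ^ m q0, htm m⟩ with ht
  have heval : eval (fun q0 : Fin n × Fin n => ι ((c' q0.1 q0.2 : K))) F
      = ∑ m ∈ F.support, t m • coeff m F := by
    rw [eval_eq]
    refine Finset.sum_congr rfl fun m _ => ?_
    show coeff m F * _ = _ * coeff m F
    rw [mul_comm]
  have hrepr : ∀ bb, b.repr (eval (fun q0 : Fin n × Fin n => ι ((c' q0.1 q0.2 : K))) F) bb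
      = ∑ m ∈ F.support, t m * b.repr (coeff m F) bb := by
    intro bb
    rw [heval, map_sum, Finsupp.finset_sum_apply]
    refine Finset.sum_congr rfl fun m _ => ?_
    rw [LinearEquiv.map_smul, Finsupp.smul_apply, smul_eq_mul]
  have hqbeval : ∀ bb, ι ((eval (fun q0 : Fin n × Fin n => c' q0.1 q0.2) (qb bb) : K))
      = ((b.repr (eval (fun q0 : Fin n × Fin n => ι ((c' q0.1 q0.2 : K))) F) bb : M)) := by
    intro bb
    have h1 : eval (fun q0 : Fin n × Fin n => c' q0.1 q0.2) (qb bb)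
        = ∑ m ∈ F.support, pull (b.repr (coeff m F) bb)
            * ∏ q0 ∈ m.support, (c' q0.1 q0.2) ^ m q0 := by
      simp only [hqb, map_sum, eval_monomial]
      rfl
    rw [hrepr bb, h1]
    push_cast
    rw [map_sum]
    refine Finset.sum_congr rfl fun m _ => ?_
    rw [_root_.map_mul, hpull2, map_prod]
    rw [mul_comm]
    congr 1
    exact Finset.prod_congr rfl fun q0 _ => by rw [map_pow]
  constructor
  · intro h0 q hq
    obtain ⟨bb, rfl⟩ := hq
    have h3 : ι ((eval (fun q0 : Fin n × Fin n => c' q0.1 q0.2) (qb bb) : K)) = 0 := by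
      rw [hqbeval bb, h0]
      simp
    have h4 : ((eval (fun q0 : Fin n × Fin n => c' q0.1 q0.2) (qb bb) : K)) = 0 := by
      apply ι.injective
      rw [h3, map_zero]
    exact Subtype.ext h4
  · intro h0
    have h5 : b.repr (eval (fun q0 : Fin n × Fin n => ι ((c' q0.1 q0.2 : K))) F) = 0 := by
      ext bb
      have h6 := h0 (qb bb) ⟨bb, rfl⟩
      have h7 : ((b.repr (eval (fun q0 : Fin n × Fin n => ι ((c' q0.1 q0.2 : K))) F) bb : M))
          = 0 := by
        rw [← hqbeval bb, h6]
        simp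
      rw [Finsupp.zero_apply]
      exact h7.trans (ZeroMemClass.coe_zero _).symm
    exact b.repr.map_eq_zero_iff.mp h5

end BasisDecomp


section Construct

include hKadd hKmul hMadd hMmul hcompat hsol hgen in
lemma exists_auto (c d : Matrix (Fin n) (Fin n) K)
    (hc0 : ∀ i j, δK (c i j) = 0) (hd0 : ∀ i j, δK (d i j) = 0)
    (hcd : c * d = 1) (hdc : d * c = 1)
    (Hc : ∀ p, evW ι δM n u p = 0 → evW ι δM n u (TT n c p) = 0)
    (Hd : ∀ p, evW ι δM n u p = 0 → evW ι δM n u (TT n d p) = 0) :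
    ∃ σ : M ≃+* M, (∀ z : K, σ (ι z) = ι z) ∧ (∀ x : M, σ (δM x) = δM (σ x)) ∧
      ∀ i, σ (u i) = ∑ j : Fin n, ι (c i j) * u j := by
  classical
  have hcι : ∀ i j, δM (ι (c i j)) = 0 := fun i j => by rw [hcompat, hc0, map_zero]
  set E := evW ι δM n u with hE
  have wd : ∀ p p', E p = E p' → E (TT n c p) = E (TT n c p') := by
    intro p p' h
    have h1 : E (p - p') = 0 := by rw [map_sub, h, sub_self]
    have h2 := Hc _ h1
    rw [map_sub, map_sub] at h2
    exact sub_eq_zero.mp h2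
  set R : Subring M := E.range with hR
  have hmem : ∀ p, E p ∈ R := fun p => ⟨p, rfl⟩
  have hpickex : ∀ r : ↥R, ∃ p, E p = (r : M) := fun r => r.2
  choose pick hpick2 using hpickex
  set φfun : ↥R → M := fun r => E (TT n c (pick r)) with hφfun
  have hwd2 : ∀ (r : ↥R) (p), E p = (r : M) → φfun r = E (TT n c p) := by
    intro r p h
    exact wd _ _ ((hpick2 r).trans h.symm)
  have hφ1 : φfun 1 = 1 := by
    rw [hwd2 1 1 (by rw [map_one]; rfl), map_one, map_one]
  have hφ0 : φfun 0 = 0 := by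
    rw [hwd2 0 0 (by rw [map_zero]; rfl), map_zero, map_zero]
  have hφmul : ∀ x y : ↥R, φfun (x * y) = φfun x * φfun y := by
    intro x y
    have h : E (pick x * pick y) = ((x * y : ↥R) : M) := by
      rw [_root_.map_mul, hpick2 x, hpick2 y]; rfl
    rw [hwd2 (x * y) _ h, _root_.map_mul, _root_.map_mul]
  have hφadd : ∀ x y : ↥R, φfun (x + y) = φfun x + φfun y := by
    intro x y
    have h : E (pick x + pick y) = ((x + y : ↥R) : M) := by
      rw [map_add, hpick2 x, hpick2 y]; rfl
    rw [hwd2 (x + y) _ h, map_add, map_add]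
  set φ : ↥R →+* M :=
    { toFun := φfun, map_one' := hφ1, map_mul' := hφmul, map_zero' := hφ0,
      map_add' := hφadd } with hφ
  have hφE : ∀ p, φ ⟨E p, hmem p⟩ = E (TT n c p) := fun p => hwd2 _ _ rfl
  have hTdc : ∀ p, TT n d (TT n c p) = p := by
    intro p; rw [TT_comp, hcd, TT_one]
  have hTcd : ∀ p, TT n c (TT n d p) = p := by
    intro p; rw [TT_comp, hdc, TT_one]
  have hφinj : Function.Injective φ := by
    intro r s h
    have h0 : φ (r - s) = 0 := by rw [map_sub, h, sub_self]
    have h1 : E (TT n c (pick (r - s))) = 0 := h0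
    have h2 := Hd _ h1
    rw [hTdc] at h2
    have h3 : ((r - s : ↥R) : M) = 0 := by rw [← hpick2 (r - s), h2]
    have h4 : r - s = 0 := Subtype.ext (by rw [h3]; rfl)
    exact sub_eq_zero.mp h4
  have hratio : ∀ z : M, ∃ x y : MvPolynomial (Fin n × Fin n) K, E y ≠ 0 ∧ z * E y = E x := by
    have hsubF : Subfield.closure (Set.range ι ∪ Set.range u) ≤
        { carrier := {z : M | ∃ x y, E y ≠ 0 ∧ z * E y = E x}
          one_mem' := ⟨1, 1, by rw [map_one]; exact one_ne_zero, by rw [map_one, one_mul]⟩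
          zero_mem' := ⟨0, 1, by rw [map_one]; exact one_ne_zero, by rw [map_zero, zero_mul]⟩
          add_mem' := by
            rintro z1 z2 ⟨x1, y1, hy1, hz1⟩ ⟨x2, y2, hy2, hz2⟩
            refine ⟨x1 * y2 + x2 * y1, y1 * y2, by rw [map_mul]; exact mul_ne_zero hy1 hy2, ?_⟩
            rw [map_add, map_mul, map_mul, map_mul]
            linear_combination E y2 * hz1 + E y1 * hz2
          neg_mem' := by
            rintro z ⟨x, y, hy, hz⟩
            exact ⟨-x, y, hy, by rw [map_neg]; linear_combination -hz⟩
          mul_mem' := by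
            rintro z1 z2 ⟨x1, y1, hy1, hz1⟩ ⟨x2, y2, hy2, hz2⟩
            refine ⟨x1 * x2, y1 * y2, by rw [map_mul]; exact mul_ne_zero hy1 hy2, ?_⟩
            rw [map_mul, map_mul]
            linear_combination z2 * E y2 * hz1 + E x1 * hz2
          inv_mem' := by
            rintro z ⟨x, y, hy, hz⟩
            rcases eq_or_ne z 0 with rfl | hz0
            · exact ⟨0, 1, by rw [map_one]; exact one_ne_zero, by rw [map_zero, inv_zero, zero_mul]⟩
            · have hx : E x ≠ 0 := by
                intro h
                rw [h] at hz
                rcases mul_eq_zero.mp hz with h' | h'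
                · exact hz0 h'
                · exact hy h'
              refine ⟨y, x, hx, ?_⟩
              rw [← hz, ← mul_assoc, inv_mul_cancel₀ hz0, one_mul] } := by
      rw [Subfield.closure_le]
      rintro w (⟨z, rfl⟩ | ⟨i, rfl⟩)
      · exact ⟨C z, 1, by rw [map_one]; exact one_ne_zero, by rw [map_one, mul_one, hE, evW_C]⟩
      · refine ⟨X (⟨0, i.pos⟩, i), 1, by rw [map_one]; exact one_ne_zero, ?_⟩
        rw [map_one, mul_one, hE, evW_X]
        rfl
    intro z
    exact hsubF (by rw [hgen]; trivial)
  letI : Algebra ↥R M := R.subtype.toAlgebra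
  letI : IsFractionRing ↥R M :=
    { map_units := by
        rintro ⟨y, hy⟩
        have hy0 : (y : M) ≠ 0 := by
          intro h
          have : y = 0 := Subtype.ext (by rw [h]; rfl)
          exact (mem_nonZeroDivisors_iff_ne_zero.mp hy) this
        exact isUnit_iff_ne_zero.mpr hy0
      surj := by
        intro z
        obtain ⟨x, y, hy, hzy⟩ := hratio z
        have hymem : (⟨E y, hmem y⟩ : ↥R) ∈ nonZeroDivisors ↥R := by
          rw [mem_nonZeroDivisors_iff_ne_zero]
          intro h
          exact hy (congrArg (fun t : ↥R => (t : M)) h)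
        exact ⟨(⟨E x, hmem x⟩, ⟨⟨E y, hmem y⟩, hymem⟩), hzy⟩
      exists_of_eq := by
        intro x y h
        exact ⟨1, by rw [Subtype.ext h]⟩ }
  set σ0 : M →+* M := IsFractionRing.lift (g := φ) hφinj with hσ0
  have hσ0E : ∀ p, σ0 (E p) = E (TT n c p) := by
    intro p
    have h1 : algebraMap ↥R M ⟨E p, hmem p⟩ = E p := rfl
    rw [hσ0, ← h1, IsFractionRing.lift_algebraMap, hφE]
  have hι' : ∀ z : K, σ0 (ι z) = ι z := by
    intro z
    have h1 : ι z = E (C z) := by rw [hE, evW_C]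
    rw [h1, hσ0E, TT_C]
  have hw : ∀ (kk : ℕ) (hkk : kk < n) (i : Fin n),
      σ0 (δM^[kk] (u i)) = ∑ j : Fin n, ι (c i j) * δM^[kk] (u j) := by
    intro kk hkk i
    have h1 : δM^[kk] (u i) = E (X ((⟨kk, hkk⟩ : Fin n), i)) := by rw [hE, evW_X]
    rw [h1, hσ0E, TT_X, map_sum]
    refine Finset.sum_congr rfl fun j _ => ?_
    rw [_root_.map_mul, hE, evW_C, evW_X]
  have hsurj : Function.Surjective σ0 := by
    have hcl : Subfield.closure (Set.range ι ∪ Set.range u) ≤ σ0.fieldRange := by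
      rw [Subfield.closure_le]
      rintro w (⟨z, rfl⟩ | ⟨i, rfl⟩)
      · exact ⟨ι z, hι' z⟩
      · refine ⟨E (TT n d (X (⟨0, i.pos⟩, i))), ?_⟩
        rw [hσ0E, hTcd, hE, evW_X]
        rfl
    intro z
    obtain ⟨w, hw'⟩ := hcl (by rw [hgen]; trivial)
    exact ⟨w, hw'⟩
  have hinj0 : Function.Injective σ0 := σ0.injective
  have hwstep : ∀ (kk : ℕ) (hkk : kk < n) (i : Fin n),
      σ0 (δM (δM^[kk] (u i))) = δM (σ0 (δM^[kk] (u i))) := by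
    intro kk hkk i
    rcases (show kk + 1 < n ∨ kk + 1 = n by omega) with hlt | heqn
    · rw [← iter_succ δM, hw (kk + 1) hlt i, hw kk hkk i, dM_sum δM hMadd]
      exact Finset.sum_congr rfl fun j _ => by
        rw [dM_const_mul δM hMadd hMmul (hcι i j), ← iter_succ δM]
    · have hmlt : ∀ m : Fin n, n - 1 - (m : ℕ) < n := fun m => by have := m.isLt; omega
      have huy : ∀ j : Fin n, δM^[n] (u j)
          = -∑ m : Fin n, ι (a m) * δM^[n - 1 - (m : ℕ)] (u j) :=
        fun j => by linear_combination hsol j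
      rw [← iter_succ δM, heqn, hw kk hkk i, dM_sum δM hMadd]
      rw [huy i, map_neg, map_sum]
      have hterm : ∀ m : Fin n, σ0 (ι (a m) * δM^[n - 1 - (m : ℕ)] (u i))
          = ι (a m) * ∑ j : Fin n, ι (c i j) * δM^[n - 1 - (m : ℕ)] (u j) := fun m => by
        rw [_root_.map_mul, hι', hw (n - 1 - (m : ℕ)) (hmlt m) i]
      rw [Finset.sum_congr rfl fun m _ => hterm m]
      have hterm2 : ∀ j : Fin n, δM (ι (c i j) * δM^[kk] (u j))
          = ι (c i j) * -∑ m : Fin n, ι (a m) * δM^[n - 1 - (m : ℕ)] (u j) := fun j => by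
        rw [dM_const_mul δM hMadd hMmul (hcι i j), ← iter_succ δM, heqn, huy j]
      rw [Finset.sum_congr rfl fun j _ => hterm2 j]
      exact sum_swap_neg (fun m => ι (a m)) (fun j => ι (c i j))
        (fun m j => δM^[n - 1 - (m : ℕ)] (u j))
  have hdcomm : ∀ x : M, σ0 (δM x) = δM (σ0 x) := by
    have hsubE : Subfield.closure (Set.range ι ∪ Set.range u) ≤
        { carrier := {x : M | σ0 (δM x) = δM (σ0 x)}
          one_mem' := by
            show σ0 (δM 1) = δM (σ0 1)
            rw [dM1 δM hMadd hMmul, map_zero, map_one]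
            exact (dM1 δM hMadd hMmul).symm
          zero_mem' := by
            show σ0 (δM 0) = δM (σ0 0)
            rw [dM0 δM hMadd, map_zero]
            exact (dM0 δM hMadd).symm
          add_mem' := by
            intro x y hx hy
            simp only [Set.mem_setOf_eq] at *
            rw [hMadd, map_add, hx, hy, map_add, hMadd]
          neg_mem' := by
            intro x hx
            simp only [Set.mem_setOf_eq] at *
            rw [dM_neg δM hMadd, map_neg, hx, map_neg, dM_neg δM hMadd]
          mul_mem' := by
            intro x y hx hy
            simp only [Set.mem_setOf_eq] at *
            rw [hMmul, map_add, _root_.map_mul, _root_.map_mul, _root_.map_mul, hx, hy, hMmul]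
          inv_mem' := by
            intro x hx
            simp only [Set.mem_setOf_eq] at *
            rcases eq_or_ne x 0 with rfl | hx0
            · rw [_root_.inv_zero]
              exact hx
            · have hσx0 : σ0 x ≠ 0 := fun h => hx0 (hinj0 (h.trans (map_zero σ0).symm))
              rw [dM_inv_formula δM hMadd hMmul x hx0, map_neg, _root_.map_mul, _root_.map_mul,
                map_inv₀, hx, dM_inv_formula δM hMadd hMmul _ hσx0] } := by
      rw [Subfield.closure_le]
      rintro x (⟨z, rfl⟩ | ⟨i, rfl⟩)
      · show σ0 (δM (ι z)) = δM (σ0 (ι z))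
        rw [hcompat, hι', hι', hcompat]
      · show σ0 (δM (u i)) = δM (σ0 (u i))
        exact hwstep 0 i.pos i
    intro x
    exact hsubE (by rw [hgen]; trivial)
  refine ⟨RingEquiv.ofBijective σ0 ⟨hinj0, hsurj⟩, fun z => hι' z, fun x => hdcomm x, fun i => ?_⟩
  exact hw 0 i.pos i

end Construct




section Part3

include hKadd hKmul hMadd hMmul hcompat hsol hwronskian hgen hconst in
lemma part3 :
    ∃ S : Set (MvPolynomial (Fin n × Fin n) K),
      (∀ p ∈ S, ∀ m, δK (MvPolynomial.coeff m p) = 0) ∧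
      ∀ c : Matrix (Fin n) (Fin n) K, (∀ i j, δK (c i j) = 0) → c.det ≠ 0 →
        ((∃ σ : M ≃+* M, (∀ z : K, σ (ι z) = ι z) ∧ (∀ x : M, σ (δM x) = δM (σ x)) ∧
            ∀ i, σ (u i) = ∑ j : Fin n, ι (c i j) * u j) ↔
          ∀ p ∈ S, MvPolynomial.eval (fun q : Fin n × Fin n => c q.1 q.2) p = 0) := by
  classical
  set CKf := CK δK hKadd hKmul with hCKf
  set G : Set ((Fin n × Fin n) → ↥CKf) := {x | ∃ σ : M ≃+* M, (∀ z : K, σ (ι z) = ι z) ∧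
      (∀ m : M, σ (δM m) = δM (σ m)) ∧
      ∀ i, σ (u i) = ∑ j : Fin n, ι ((x (i, j) : K)) * u j} with hGdef
  set J : Ideal (MvPolynomial (Fin n × Fin n) ↥CKf) := MvPolynomial.vanishingIdeal (↥CKf) G with hJ
  have hbridge : ∀ (q : MvPolynomial (Fin n × Fin n) ↥CKf) (x : (Fin n × Fin n) → ↥CKf),
      MvPolynomial.eval (fun q0 => ((x q0 : K))) (MvPolynomial.map (CKf.subtype) q)
        = CKf.subtype (MvPolynomial.eval x q) := by
    intro q x
    have h : (MvPolynomial.eval (fun q0 => ((x q0 : K)))).comp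
          ((MvPolynomial.map (CKf.subtype) : MvPolynomial (Fin n × Fin n) ↥CKf →+* _))
        = (CKf.subtype).comp (MvPolynomial.eval x) := by
      apply MvPolynomial.ringHom_ext
      · intro r; simp
      · intro q0; simp
    exact RingHom.congr_fun h q
  have hGcomp : ∀ x ∈ G, ∀ y ∈ G,
      (fun q0 : Fin n × Fin n => ∑ l : Fin n, x (q0.1, l) * y (l, q0.2)) ∈ G := by
    rintro x ⟨σx, hσx1, hσx2, hσx3⟩ y ⟨σy, hσy1, hσy2, hσy3⟩
    refine ⟨σx.trans σy, fun z => ?_, fun m => ?_, fun i => ?_⟩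
    · rw [RingEquiv.trans_apply, hσx1, hσy1]
    · rw [RingEquiv.trans_apply, hσx2, hσy2]
      rfl
    · rw [RingEquiv.trans_apply, hσx3 i, map_sum]
      have h1 : ∀ j, σy (ι ((x (i, j) : K)) * u j)
          = ι ((x (i, j) : K)) * ∑ l : Fin n, ι ((y (j, l) : K)) * u l := fun j => by
        rw [_root_.map_mul, hσy1, hσy3 j]
      rw [Finset.sum_congr rfl fun j _ => h1 j]
      simp_rw [Finset.mul_sum]
      rw [Finset.sum_comm]
      refine Finset.sum_congr rfl fun l _ => ?_
      have h2 : (((∑ j : Fin n, x (i, j) * y (j, l) : ↥CKf)) : K)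
          = ∑ j : Fin n, ((x (i, j) : K)) * ((y (j, l) : K)) := by
        push_cast
        rfl
      show ∑ j : Fin n, ι ((x (i, j) : K)) * (ι ((y (j, l) : K)) * u l)
          = ι (((∑ j : Fin n, x (i, j) * y (j, l) : ↥CKf) : K)) * u l
      rw [h2, map_sum, Finset.sum_mul]
      refine Finset.sum_congr rfl fun j _ => ?_
      rw [_root_.map_mul]
      ring
  have hGone : (fun q0 : Fin n × Fin n =>
      if q0.1 = q0.2 then (1 : ↥CKf) else 0) ∈ G := by
    refine ⟨RingEquiv.refl M, fun z => rfl, fun m => rfl, fun i => ?_⟩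
    show u i = ∑ j : Fin n, ι ((((if i = j then (1 : ↥CKf) else 0) : ↥CKf) : K)) * u j
    have h1 : ∀ j : Fin n, ι ((((if i = j then (1 : ↥CKf) else 0) : ↥CKf) : K)) * u j
        = if i = j then u j else 0 := fun j => by
      by_cases h : i = j <;> simp [h]
    rw [Finset.sum_congr rfl fun j _ => h1 j, Finset.sum_ite_eq]
    simp
  have hQ : ∀ p : MvPolynomial (Fin n × Fin n) K, evW ι δM n u p = 0 →
      ∀ x : (Fin n × Fin n) → ↥CKf, (∀ q ∈ J, MvPolynomial.eval x q = 0) →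
      evW ι δM n u (TT n (Matrix.of fun i j : Fin n => ((x (i, j) : K))) p) = 0 := by
    intro p hp x hx
    obtain ⟨Q, hQiff⟩ := basis_decomp δK hKadd hKmul ι δM hMadd hMmul hcompat n hconst
      (PhiW ι δM n u p)
    have hQJ : ∀ q ∈ Q, q ∈ J := by
      intro q hq
      rw [hJ, MvPolynomial.mem_vanishingIdeal_iff]
      intro g hg
      obtain ⟨σg, h1, h2, h3⟩ := hg
      have hHg : evW ι δM n u (TT n (Matrix.of fun i j : Fin n => ((g (i, j) : K))) p) = 0 :=
        Hc_of_auto δK ι δM hMadd hMmul hcompat n u σg h1 h2 _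
          (fun i j => (g (i, j)).2) h3 p hp
      have h4 : MvPolynomial.eval
          (fun q0 : Fin n × Fin n =>
            ι ((Matrix.of fun i j : Fin n => ((g (i, j) : K))) q0.1 q0.2))
          (PhiW ι δM n u p) = 0 := by
        rw [eval_PhiW ι δM n u (Matrix.of fun i j : Fin n => ((g (i, j) : K))) p]
        exact hHg
      exact (hQiff (Matrix.of fun i j : Fin n => g (i, j))).mp h4 q hq
    have h6 : ∀ q ∈ Q, MvPolynomial.eval
        (fun q0 : Fin n × Fin n =>
          (((Matrix.of fun i j : Fin n => x (i, j)) : Matrix (Fin n) (Fin n) ↥CKf)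
            q0.1 q0.2)) q = 0 := fun q hq => hx q (hQJ q hq)
    have h7 := (hQiff (Matrix.of fun i j : Fin n => x (i, j))).mpr h6
    rw [← eval_PhiW ι δM n u (Matrix.of fun i j : Fin n => ((x (i, j) : K))) p]
    exact h7
  have hGbar : G ≤ MvPolynomial.zeroLocus (↥CKf) J :=
    MvPolynomial.zeroLocus_vanishingIdeal_le G
  have hstep1 : ∀ g ∈ G, ∀ y ∈ MvPolynomial.zeroLocus (↥CKf) J,
      (fun q0 : Fin n × Fin n => ∑ l : Fin n, g (q0.1, l) * y (l, q0.2))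
        ∈ MvPolynomial.zeroLocus (↥CKf) J := by
    intro g hg y hy
    rw [MvPolynomial.mem_zeroLocus_iff]
    intro q hq
    have h1 := eval_SL n y (Matrix.of fun i l : Fin n => g (i, l)) q
    have h2 : SL n (Matrix.of fun i l : Fin n => g (i, l)) q ∈ J := by
      rw [hJ, MvPolynomial.mem_vanishingIdeal_iff]
      intro h hh
      have h3 := eval_SL n h (Matrix.of fun i l : Fin n => g (i, l)) q
      rw [MvPolynomial.aeval_eq_eval, h3]
      exact (MvPolynomial.mem_vanishingIdeal_iff.mp hq) _ (hGcomp g hg h hh)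
    have h4 := MvPolynomial.mem_zeroLocus_iff.mp hy _ h2
    rw [MvPolynomial.aeval_eq_eval, h1] at h4
    exact h4
  have hstep2 : ∀ x ∈ MvPolynomial.zeroLocus (↥CKf) J, ∀ y ∈ MvPolynomial.zeroLocus (↥CKf) J,
      (fun q0 : Fin n × Fin n => ∑ l : Fin n, x (q0.1, l) * y (l, q0.2))
        ∈ MvPolynomial.zeroLocus (↥CKf) J := by
    intro x hx y hy
    rw [MvPolynomial.mem_zeroLocus_iff]
    intro q hq
    have hfun : (fun q0 : Fin n × Fin n =>
        ∑ j : Fin n, (Matrix.of fun jj l : Fin n => y (l, jj)) q0.2 j * x (q0.1, j))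
        = fun q0 : Fin n × Fin n => ∑ l : Fin n, x (q0.1, l) * y (l, q0.2) := by
      funext q0
      exact Finset.sum_congr rfl fun l _ => mul_comm _ _
    have h1 := eval_TT n x (Matrix.of fun jj l : Fin n => y (l, jj)) q
    rw [hfun] at h1
    have h2 : TT n (Matrix.of fun jj l : Fin n => y (l, jj)) q ∈ J := by
      rw [hJ, MvPolynomial.mem_vanishingIdeal_iff]
      intro g hg
      have h3 := eval_TT n g (Matrix.of fun jj l : Fin n => y (l, jj)) q
      have hfun2 : (fun q0 : Fin n × Fin n =>
          ∑ j : Fin n, (Matrix.of fun jj l : Fin n => y (l, jj)) q0.2 j * g (q0.1, j))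
          = fun q0 : Fin n × Fin n => ∑ l : Fin n, g (q0.1, l) * y (l, q0.2) := by
        funext q0
        exact Finset.sum_congr rfl fun l _ => mul_comm _ _
      rw [hfun2] at h3
      rw [MvPolynomial.aeval_eq_eval, h3]
      exact MvPolynomial.mem_zeroLocus_iff.mp (hstep1 g hg y hy) _ hq
    have h4 := MvPolynomial.mem_zeroLocus_iff.mp hx _ h2
    rw [MvPolynomial.aeval_eq_eval, h1] at h4
    exact h4
  refine ⟨(MvPolynomial.map (CKf.subtype)) '' (J : Set _), ?_, ?_⟩
  · rintro p ⟨q, hq, rfl⟩ m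
    rw [MvPolynomial.coeff_map]
    exact (MvPolynomial.coeff m q).2
  intro c hcst hcdet
  set c' : Matrix (Fin n) (Fin n) ↥CKf := Matrix.of fun i j => (⟨c i j, hcst i j⟩ : ↥CKf)
    with hc'
  constructor
  · rintro ⟨σ, h1, h2, h3⟩ p ⟨q, hq, rfl⟩
    have hxG : (fun q0 : Fin n × Fin n => c' q0.1 q0.2) ∈ G := ⟨σ, h1, h2, fun i => h3 i⟩
    have h4 : MvPolynomial.eval (fun q0 : Fin n × Fin n => c' q0.1 q0.2) q = 0 :=
      MvPolynomial.mem_vanishingIdeal_iff.mp hq _ hxG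
    have h5 := hbridge q (fun q0 : Fin n × Fin n => c' q0.1 q0.2)
    rw [h4, map_zero] at h5
    exact h5
  · intro hvan
    have hc'pt : (fun q0 : Fin n × Fin n => c' q0.1 q0.2) ∈ MvPolynomial.zeroLocus (↥CKf) J := by
      rw [MvPolynomial.mem_zeroLocus_iff]
      intro q hq
      have h5 := hbridge q (fun q0 : Fin n × Fin n => c' q0.1 q0.2)
      have h6 : MvPolynomial.eval (fun q0 : Fin n × Fin n => ((c' q0.1 q0.2 : K)))
          (MvPolynomial.map CKf.subtype q) = 0 := hvan _ ⟨q, hq, rfl⟩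
      have h7 : CKf.subtype (MvPolynomial.eval (fun q0 : Fin n × Fin n => c' q0.1 q0.2) q)
          = 0 := by
        rw [← h5]
        exact h6
      exact Subtype.ext (h7.trans (ZeroMemClass.coe_zero _).symm)
    have hcdetC : c'.det ≠ 0 := by
      intro h
      have h1 : CKf.subtype c'.det = (c'.map CKf.subtype).det := RingHom.map_det _ _
      have h2 : c'.map CKf.subtype = c := by
        ext i j
        rfl
      rw [h, h2] at h1
      exact hcdet (h1.symm.trans (map_zero _))
    set ym : Matrix (Fin n) (Fin n) ↥CKf := c'⁻¹ with hym
    have hxy : c' * ym = 1 := Matrix.mul_nonsing_inv _ (Ne.isUnit hcdetC)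
    have hyx : ym * c' = 1 := Matrix.nonsing_inv_mul _ (Ne.isUnit hcdetC)
    have hcancel : ∀ k : ℕ, ym ^ k * c' ^ k = 1 := by
      intro k
      induction k with
      | zero => simp
      | succ kk ih =>
          rw [pow_succ ym kk, pow_succ' c' kk, mul_assoc, ← mul_assoc ym c' (c' ^ kk), hyx,
            one_mul, ih]
    have passoc : ∀ (A B : Matrix (Fin n) (Fin n) ↥CKf) (z : (Fin n × Fin n) → ↥CKf),
        (fun q0 : Fin n × Fin n => ∑ l : Fin n,
            A q0.1 l * ∑ m : Fin n, B l m * z (m, q0.2))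
        = fun q0 : Fin n × Fin n => ∑ m : Fin n, (A * B) q0.1 m * z (m, q0.2) := by
      intro A B z
      funext q0
      simp_rw [Finset.mul_sum]
      rw [Finset.sum_comm]
      refine Finset.sum_congr rfl fun m _ => ?_
      rw [Matrix.mul_apply, Finset.sum_mul]
      exact Finset.sum_congr rfl fun l _ => by ring
    have hyminG : (fun q0 : Fin n × Fin n => ym q0.1 q0.2) ∈ MvPolynomial.zeroLocus (↥CKf) J := by
      set Zk : ℕ → Set ((Fin n × Fin n) → ↥CKf) := fun k =>
        {z | (fun q0 : Fin n × Fin n => ∑ l : Fin n, (ym ^ k) q0.1 l * z (l, q0.2))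
          ∈ MvPolynomial.zeroLocus (↥CKf) J} with hZkdef
      have hZloc : ∀ k, Zk k = MvPolynomial.zeroLocus (↥CKf) (J.map (SL n (ym ^ k))) := by
        intro k
        ext z
        constructor
        · intro hz
          rw [MvPolynomial.mem_zeroLocus_iff]
          intro p hp
          have hle : J.map (SL n (ym ^ k)) ≤ RingHom.ker (MvPolynomial.eval z) := by
            rw [Ideal.map_le_iff_le_comap]
            intro q hq
            show MvPolynomial.eval z (SL n (ym ^ k) q) = 0
            rw [eval_SL]
            exact MvPolynomial.mem_zeroLocus_iff.mp hz _ hq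
          exact hle hp
        · intro hz
          show (fun q0 : Fin n × Fin n => ∑ l : Fin n, (ym ^ k) q0.1 l * z (l, q0.2))
            ∈ MvPolynomial.zeroLocus (↥CKf) J
          rw [MvPolynomial.mem_zeroLocus_iff]
          intro q hq
          rw [MvPolynomial.aeval_eq_eval, ← eval_SL n z (ym ^ k) q]
          exact MvPolynomial.mem_zeroLocus_iff.mp hz _ (Ideal.mem_map_of_mem _ hq)
      have hZdesc : ∀ k, Zk (k + 1) ⊆ Zk k := by
        intro k z hz
        have h2 := hstep2 _ hc'pt _ hz
        show (fun q0 : Fin n × Fin n => ∑ l : Fin n, (ym ^ k) q0.1 l * z (l, q0.2))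
          ∈ MvPolynomial.zeroLocus (↥CKf) J
        have h3 := passoc c' (ym ^ (k + 1)) z
        have h1 : c' * ym ^ (k + 1) = ym ^ k := by
          rw [pow_succ' ym k, ← mul_assoc, hxy, one_mul]
        rw [h1] at h3
        rw [← h3]
        exact h2
      have hZmono : ∀ m k : ℕ, k ≤ m → Zk m ⊆ Zk k := by
        intro m
        induction m with
        | zero =>
            intro k hk
            rw [Nat.le_zero.mp hk]
        | succ mm ih =>
            intro k hk
            rcases eq_or_lt_of_le hk with rfl | h
            · exact subset_rfl
            · exact fun z hz => ih k (Nat.lt_succ_iff.mp h) (hZdesc mm hz)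
      set f : ℕ →o Ideal (MvPolynomial (Fin n × Fin n) ↥CKf) :=
        ⟨fun k => MvPolynomial.vanishingIdeal (↥CKf) (Zk k),
          fun k m hkm => MvPolynomial.vanishingIdeal_anti_mono (hZmono m k hkm)⟩ with hf
      obtain ⟨N, hN⟩ := monotone_stabilizes_iff_noetherian.mpr inferInstance f
      have hfix : ∀ k, MvPolynomial.zeroLocus (↥CKf) (MvPolynomial.vanishingIdeal (↥CKf) (Zk k)) = Zk k := by
        intro k
        rw [hZloc k]
        refine subset_antisymm ?_ (MvPolynomial.zeroLocus_vanishingIdeal_le _)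
        exact MvPolynomial.zeroLocus_anti_mono (MvPolynomial.le_vanishingIdeal_zeroLocus _)
      have hZeq : Zk N = Zk (N + 1) := by
        have h1 : f N = f (N + 1) := hN (N + 1) (Nat.le_succ N)
        have h2 : MvPolynomial.vanishingIdeal (↥CKf) (Zk N)
            = MvPolynomial.vanishingIdeal (↥CKf) (Zk (N + 1)) := h1
        rw [← hfix N, ← hfix (N + 1), h2]
      have hident : (fun q0 : Fin n × Fin n =>
          (1 : Matrix (Fin n) (Fin n) ↥CKf) q0.1 q0.2) ∈ MvPolynomial.zeroLocus (↥CKf) J := by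
        have h1 : (fun q0 : Fin n × Fin n => (1 : Matrix (Fin n) (Fin n) ↥CKf) q0.1 q0.2)
            = fun q0 : Fin n × Fin n => if q0.1 = q0.2 then (1 : ↥CKf) else 0 := by
          funext q0
          exact Matrix.one_apply
        rw [h1]
        exact hGbar hGone
      have hmemN : (fun q0 : Fin n × Fin n => (c' ^ N) q0.1 q0.2) ∈ Zk N := by
        show (fun q0 : Fin n × Fin n => ∑ l : Fin n, (ym ^ N) q0.1 l * (c' ^ N) l q0.2)
          ∈ MvPolynomial.zeroLocus (↥CKf) J
        have h1 : (fun q0 : Fin n × Fin n => ∑ l : Fin n, (ym ^ N) q0.1 l * (c' ^ N) l q0.2)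
            = fun q0 : Fin n × Fin n => (1 : Matrix (Fin n) (Fin n) ↥CKf) q0.1 q0.2 := by
          funext q0
          rw [← Matrix.mul_apply, hcancel N]
        rw [h1]
        exact hident
      have hmemN1 : (fun q0 : Fin n × Fin n => (c' ^ N) q0.1 q0.2) ∈ Zk (N + 1) := by
        rw [← hZeq]
        exact hmemN
      have h2 : (fun q0 : Fin n × Fin n => ∑ l : Fin n, (ym ^ (N + 1)) q0.1 l * (c' ^ N) l q0.2)
          ∈ MvPolynomial.zeroLocus (↥CKf) J := hmemN1
      have h3 : (fun q0 : Fin n × Fin n => ∑ l : Fin n, (ym ^ (N + 1)) q0.1 l * (c' ^ N) l q0.2)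
          = fun q0 : Fin n × Fin n => ym q0.1 q0.2 := by
        funext q0
        rw [← Matrix.mul_apply]
        have h4 : ym ^ (N + 1) * c' ^ N = ym := by
          rw [pow_succ' ym N, mul_assoc, hcancel N, mul_one]
        rw [h4]
      rw [← h3]
      exact h2
    -- now build the automorphism
    have hmapmul : (c' * ym).map (CKf.subtype) = c'.map CKf.subtype * ym.map CKf.subtype :=
      Matrix.map_mul
    have hmapmul2 : (ym * c').map (CKf.subtype) = ym.map CKf.subtype * c'.map CKf.subtype :=
      Matrix.map_mul
    have hmapone : (1 : Matrix (Fin n) (Fin n) ↥CKf).map (CKf.subtype) = 1 :=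
      Matrix.map_one _ (map_zero _) (map_one _)
    have h8 : c'.map CKf.subtype * ym.map CKf.subtype = 1 := by
      rw [← hmapmul, hxy, hmapone]
    have h9 : ym.map CKf.subtype * c'.map CKf.subtype = 1 := by
      rw [← hmapmul2, hyx, hmapone]
    have Hcc : ∀ p, evW ι δM n u p = 0 → evW ι δM n u (TT n (c'.map CKf.subtype) p) = 0 :=
      fun p hp => hQ p hp (fun q0 : Fin n × Fin n => c' q0.1 q0.2)
        (MvPolynomial.mem_zeroLocus_iff.mp hc'pt)
    have Hdd : ∀ p, evW ι δM n u p = 0 → evW ι δM n u (TT n (ym.map CKf.subtype) p) = 0 :=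
      fun p hp => hQ p hp (fun q0 : Fin n × Fin n => ym q0.1 q0.2)
        (MvPolynomial.mem_zeroLocus_iff.mp hyminG)
    obtain ⟨σ, hσ1, hσ2, hσ3⟩ := exists_auto δK hKadd hKmul ι δM hMadd hMmul hcompat n a u
      hsol hgen (c'.map CKf.subtype) (ym.map CKf.subtype)
      (fun i j => (c' i j).2) (fun i j => (ym i j).2) h8 h9 Hcc Hdd
    exact ⟨σ, hσ1, hσ2, fun i => hσ3 i⟩

end Part3

end DGalAux



/-- Let `M = K(u 0, …, u (n-1))` be a Picard-Vessiot extension of a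
differential field `K` of characteristic zero (embedding `ι`, derivations `δK`, `δM`),
with fundamental system of solutions `u` of a linear homogeneous differential equation of
order `n` over `K`. Then:
(1) every differential `K`-automorphism `σ` of `M` satisfies
    `σ (u i) = ∑ j, ι (c i j) * u j` for a unique invertible matrix `c` of constants;
(2) the resulting map into `GL_n(C)` is injective (an automorphism is determined by its
    matrix); and
(3) the image is an algebraic matrix group over the constants: there is a set `S` of
    polynomials in `n²` variables with constant coefficients such that an invertible
    matrix of constants arises from a differential `K`-automorphism iff all polynomials
    of `S` vanish on it. -/
theorem differential_galois_group_is_algebraic_matrix_group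
    {K M : Type*} [Field K] [CharZero K] [Field M]
    (δK : K → K)
    (hKadd : ∀ x y, δK (x + y) = δK x + δK y)
    (hKmul : ∀ x y, δK (x * y) = x * δK y + y * δK x)
    (ι : K →+* M) (δM : M → M)
    (hMadd : ∀ x y, δM (x + y) = δM x + δM y)
    (hMmul : ∀ x y, δM (x * y) = x * δM y + y * δM x)
    (hcompat : ∀ c : K, δM (ι c) = ι (δK c))
    (n : ℕ) (a : Fin n → K) (u : Fin n → M)
    (hsol : ∀ i, δM^[n] (u i) + ∑ j : Fin n, ι (a j) * δM^[n - 1 - (j : ℕ)] (u i) = 0)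
    (hwronskian : Matrix.det (Matrix.of fun i j : Fin n => δM^[(i : ℕ)] (u j)) ≠ 0)
    (hgen : Subfield.closure (Set.range ι ∪ Set.range u) = ⊤)
    (hconst : ∀ z : M, δM z = 0 → ∃ c : K, δK c = 0 ∧ ι c = z) :
    (∀ σ : M ≃+* M, (∀ c : K, σ (ι c) = ι c) → (∀ x : M, σ (δM x) = δM (σ x)) →
      ∃! c : Matrix (Fin n) (Fin n) K,
        (∀ i j, δK (c i j) = 0) ∧ c.det ≠ 0 ∧
          ∀ i, σ (u i) = ∑ j : Fin n, ι (c i j) * u j) ∧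
    (∀ σ τ : M ≃+* M,
      (∀ c : K, σ (ι c) = ι c) → (∀ x : M, σ (δM x) = δM (σ x)) →
      (∀ c : K, τ (ι c) = ι c) → (∀ x : M, τ (δM x) = δM (τ x)) →
      (∀ i, σ (u i) = τ (u i)) → σ = τ) ∧
    (∃ S : Set (MvPolynomial (Fin n × Fin n) K),
      (∀ p ∈ S, ∀ m, δK (MvPolynomial.coeff m p) = 0) ∧
      ∀ c : Matrix (Fin n) (Fin n) K, (∀ i j, δK (c i j) = 0) → c.det ≠ 0 →
        ((∃ σ : M ≃+* M, (∀ z : K, σ (ι z) = ι z) ∧ (∀ x : M, σ (δM x) = δM (σ x)) ∧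
            ∀ i, σ (u i) = ∑ j : Fin n, ι (c i j) * u j) ↔
          ∀ p ∈ S, MvPolynomial.eval (fun q : Fin n × Fin n => c q.1 q.2) p = 0)) := by
  classical
  refine ⟨?_, ?_, ?_⟩
  · intro σ hσι hσδ
    obtain ⟨c, hc1, hc2, hc3⟩ := DGalAux.exists_matrix δK ι δM hMadd hMmul hcompat n a u hsol
      hwronskian hconst σ hσι hσδ
    refine ⟨c, ⟨hc1, hc2, fun i => hc3 i 0 i.pos⟩, ?_⟩
    rintro c₂ ⟨h1, h2, h3⟩
    ext i j
    have hz : ∑ jj : Fin n, ι (c₂ i jj - c i jj) * u jj = 0 := by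
      have h4 : ∑ jj : Fin n, (ι (c₂ i jj) * u jj - ι (c i jj) * u jj) = 0 := by
        rw [Finset.sum_sub_distrib, ← h3 i,
          ← (show σ (u i) = ∑ jj : Fin n, ι (c i jj) * u jj from hc3 i 0 i.pos), sub_self]
      rw [← h4]
      exact Finset.sum_congr rfl fun jj _ => by rw [map_sub, sub_mul]
    have h5 := DGalAux.const_combo_unique δK ι δM hMadd hMmul hcompat n u hwronskian
      (fun jj => c₂ i jj - c i jj)
      (fun jj => by rw [DGalAux.dK_sub δK hKadd, h1 i jj, hc1 i jj, sub_self]) hz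
    exact sub_eq_zero.mp (h5 j)
  · intro σ τ hσι hσδ hτι hτδ hu
    exact DGalAux.aut_ext ι n u hgen σ τ (fun k => (hσι k).trans (hτι k).symm) hu
  · exact DGalAux.part3 δK hKadd hKmul ι δM hMadd hMmul hcompat n a u hsol hwronskian hgen hconst
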